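/- Let (Ω,F,P) be a probability space and let G₁, G₂, G₃ be three sub-σ-fields of F. Suppose that G₁ ⊆ G₂ ∨ G₃ up to P-null sets (i.e., every A ∈ G₁ differs by a P-null set from some set in G₂ ∨ G₃) and that G₁ ∨ G₂ is independent of G₃. Then G₁ ⊆ G₂ up to P-null sets, i.e., every A ∈ G₁ differs by a P-null set from some set in G₂. -/

import Mathlib

open MeasureTheory ProbabilityTheory Filter Topology
open scoped NNReal ENNReal

universe u v w w₂

noncomputable section

/-- The sub-σ-field generated by the process `Y` from index `k` on; since index `j : ℕ`
stands for time `-j`, this is the σ-field of the past `σ(Y_j : j ≤ -k)`. -/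
def past {Ω α : Type*} [MeasurableSpace α] (Y : ℕ → Ω → α) (k : ℕ) : MeasurableSpace Ω :=
  ⨆ j ≥ k, MeasurableSpace.comap (Y j) inferInstance

/-- A solution of Tsirelson's equation with noise law `μ`.  The index `k : ℕ` stands for the
time `-k ∈ -ℕ`, so that time `k - 1` corresponds to index `k + 1`. -/
structure IsSolution {Ω S G : Type*} [MeasurableSpace Ω] [MeasurableSpace S] [MeasurableSpace G]
    [SMul G S] (P : Measure Ω) (μ : ℕ → Measure G)
    (X : ℕ → Ω → S) (N : ℕ → Ω → G) : Prop where
  measurable_X : ∀ k, Measurable (X k)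
  measurable_N : ∀ k, Measurable (N k)
  eqn : ∀ k, X k =ᵐ[P] fun ω => N k ω • X (k + 1) ω
  indep : ∀ k, Indep (MeasurableSpace.comap (N k) inferInstance)
      (past X (k + 1) ⊔ past N (k + 1)) P
  law_N : ∀ k, P.map (N k) = μ k

/-- The joint law of `(X, N)` on the path space `S^{-ℕ} × Σ^{-ℕ}`. -/
def jointLaw {Ω S G : Type*} [MeasurableSpace Ω] [MeasurableSpace S] [MeasurableSpace G]
    (P : Measure Ω) (X : ℕ → Ω → S) (N : ℕ → Ω → G) : Measure ((ℕ → S) × (ℕ → G)) :=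
  P.map fun ω => (fun k => X k ω, fun k => N k ω)

/-- A solution is strong if each `X k` is a.s. equal to a `past N k`-measurable function,
i.e. `X k` is measurable for the `P`-completion of `σ(N_j : j ≤ -k)`. -/
def IsStrong {Ω S G : Type*} [MeasurableSpace Ω] [MeasurableSpace S] [MeasurableSpace G]
    (P : Measure Ω) (X : ℕ → Ω → S) (N : ℕ → Ω → G) : Prop :=
  ∀ k, ∃ Y : Ω → S, Measurable[past N k] Y ∧ X k =ᵐ[P] Y

/-- Triviality of the tail σ-field `⨅ k, m k`. -/
def TailTrivial {Ω : Type*} [MeasurableSpace Ω] (P : Measure Ω)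
    (m : ℕ → MeasurableSpace Ω) : Prop :=
  ∀ A : Set Ω, MeasurableSet[⨅ k, m k] A → P A = 0 ∨ P A = 1

/-- Convolution `μ * ν` of a measure on the acting semigroup with a measure on the space:
the pushforward of `μ ⊗ ν` under the action map. -/
def conv {G S : Type*} [MeasurableSpace G] [MeasurableSpace S] [SMul G S]
    (μ : Measure G) (ν : Measure S) : Measure S :=
  (μ.prod ν).map fun p => p.1 • p.2

/-- Convolution of two measures on the semigroup. -/
def convG {G : Type*} [MeasurableSpace G] [Mul G] (μ ν : Measure G) : Measure G :=
  (μ.prod ν).map fun p => p.1 * p.2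

/-- `prodN N n j = N_n · N_{n+1} · ⋯ · N_{n+j}`; in the time-indexing of the paper (index `m`
is time `-m`) this is `N_{k,l}` with `k = -n` and `l = -(n+j)-1 → -∞` as `j → ∞`. -/
def prodN {Ω G : Type*} [Mul G] (N : ℕ → Ω → G) (n : ℕ) : ℕ → Ω → G
  | 0 => N n
  | j + 1 => fun ω => prodN N n j ω * N (n + j + 1) ω

/-- `convIter μ n j = μ_n * μ_{n+1} * ⋯ * μ_{n+j}`, the law analogue of `prodN`. -/
def convIter {G : Type*} [MeasurableSpace G] [Mul G] (μ : ℕ → Measure G) (n : ℕ) :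
    ℕ → Measure G
  | 0 => μ n
  | j + 1 => convG (convIter μ n j) (μ (n + j + 1))

/-- `sigPow G n` is `Σ^{n+1}`, the set of products of `n+1` elements of `Σ = G`. -/
def sigPow (G : Type*) [Mul G] : ℕ → Set G
  | 0 => Set.univ
  | n + 1 => Set.image2 (· * ·) (sigPow G n) Set.univ

/-- Two sub-σ-fields are equal up to `P`-null sets. -/
def EqModNull {Ω : Type*} [MeasurableSpace Ω] (P : Measure Ω)
    (m₁ m₂ : MeasurableSpace Ω) : Prop :=
  (∀ A, MeasurableSet[m₁] A → ∃ B, MeasurableSet[m₂] B ∧ P (symmDiff A B) = 0) ∧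
  (∀ B, MeasurableSet[m₂] B → ∃ A, MeasurableSet[m₁] A ∧ P (symmDiff A B) = 0)

end

section Context

variable {S : Type u} {G : Type v}
  [TopologicalSpace S] [CompactSpace S] [TopologicalSpace.MetrizableSpace S]
  [SecondCountableTopology S] [MeasurableSpace S] [BorelSpace S]
  [TopologicalSpace G] [CompactSpace G] [TopologicalSpace.MetrizableSpace G]
  [SecondCountableTopology G] [MeasurableSpace G] [BorelSpace G]
  [Semigroup G] [ContinuousMul G]
  [SMul G S] [ContinuousSMul G S] [IsScalarTower G G S]

end Context

/-- If `G₁ ⊆ G₂ ∨ G₃` up to `P`-null sets and `G₁ ∨ G₂` is independent of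
`G₃`, then `G₁ ⊆ G₂` up to `P`-null sets. -/
theorem subset_modNull_of_indep
    {Ω : Type w} [m0 : MeasurableSpace Ω] (P : Measure Ω) [IsProbabilityMeasure P]
    (G₁ G₂ G₃ : MeasurableSpace Ω) (h₁ : G₁ ≤ m0) (h₂ : G₂ ≤ m0) (h₃ : G₃ ≤ m0)
    (hsub : ∀ A : Set Ω, MeasurableSet[G₁] A →
      ∃ B : Set Ω, MeasurableSet[G₂ ⊔ G₃] B ∧ P (symmDiff A B) = 0)
    (hindep : Indep (G₁ ⊔ G₂) G₃ P) :
    ∀ A : Set Ω, MeasurableSet[G₁] A →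
      ∃ B : Set Ω, MeasurableSet[G₂] B ∧ P (symmDiff A B) = 0 := by
  intro A hA
  letI : MeasurableSpace Ω := m0
  have hm : G₂ ⊔ G₃ ≤ m0 := sup_le h₂ h₃
  haveI : SigmaFinite (P.trim hm) := inferInstance
  haveI : SigmaFinite (P.trim h₂) := inferInstance
  set g : Ω → ℝ := A.indicator 1 with hg_def
  have hAmeas : MeasurableSet[m0] A := h₁ _ hA
  have hg_int : Integrable g P := (integrable_const (1 : ℝ)).indicator hAmeas
  set f : Ω → ℝ := P[g|G₂] with hf_def
  have hf_sm : StronglyMeasurable[G₂] f := stronglyMeasurable_condExp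
  have hf_int : Integrable f P := integrable_condExp
  obtain ⟨B, hBm, hAB⟩ := hsub A hA
  have hABae : A =ᵐ[P] B := measure_symmDiff_eq_zero_iff.mp hAB
  have hgB : g =ᵐ[P] B.indicator 1 := by
    filter_upwards [hABae] with ω hω
    show A.indicator 1 ω = B.indicator 1 ω
    have hiff : ω ∈ A ↔ ω ∈ B := iff_of_eq hω
    by_cases h : ω ∈ A
    · rw [Set.indicator_of_mem h, Set.indicator_of_mem (hiff.mp h)]
    · rw [Set.indicator_of_notMem h,
        Set.indicator_of_notMem (fun hb => h (hiff.mpr hb))]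
  have hB_int : Integrable (B.indicator (1 : Ω → ℝ)) P := hg_int.congr hgB
  -- the π-system of intersections
  set π : Set (Set Ω) :=
    {s | ∃ t₁ t₂, MeasurableSet[G₂] t₁ ∧ MeasurableSet[G₃] t₂ ∧ s = t₁ ∩ t₂} with hπ_def
  have hπ : IsPiSystem π := by
    rintro s₁ ⟨c₁, d₁, hc₁, hd₁, rfl⟩ s₂ ⟨c₂, d₂, hc₂, hd₂, rfl⟩ -
    exact ⟨c₁ ∩ c₂, d₁ ∩ d₂, hc₁.inter hc₂, hd₁.inter hd₂, by
      ext x; simp only [Set.mem_inter_iff]; tauto⟩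
  have hgen : (G₂ ⊔ G₃ : MeasurableSpace Ω) = MeasurableSpace.generateFrom π := by
    refine le_antisymm (sup_le ?_ ?_) (MeasurableSpace.generateFrom_le ?_)
    · intro s hs
      exact MeasurableSpace.measurableSet_generateFrom
        ⟨s, Set.univ, hs, MeasurableSet.univ, (Set.inter_univ s).symm⟩
    · intro s hs
      exact MeasurableSpace.measurableSet_generateFrom
        ⟨Set.univ, s, MeasurableSet.univ, hs, (Set.univ_inter s).symm⟩
    · rintro _ ⟨c, d, hc, hd, rfl⟩
      exact ((le_sup_left : G₂ ≤ G₂ ⊔ G₃) _ hc).inter ((le_sup_right : G₃ ≤ G₂ ⊔ G₃) _ hd)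
  -- key : same set integrals on G₂ ⊔ G₃
  have hkey : ∀ s : Set Ω, MeasurableSet[G₂ ⊔ G₃] s →
      ∫ x in s, f x ∂P = ∫ x in s, g x ∂P := by
    intro s hs
    refine MeasurableSpace.induction_on_inter (m := G₂ ⊔ G₃) (C := fun t _ => ∫ x in t, f x ∂P = ∫ x in t, g x ∂P) hgen hπ ?_ ?_ ?_ ?_ s hs
    · simp
    · rintro _ ⟨c, d, hc, hd, rfl⟩
      have hc0 : MeasurableSet c := h₂ _ hc
      have hd0 : MeasurableSet d := h₃ _ hd
      -- independence of the relevant functions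
      set φ : Ω → ℝ := c.indicator f with hφ_def
      set ψ : Ω → ℝ := d.indicator 1 with hψ_def
      have hφm : Measurable[G₂] φ := (hf_sm.measurable).indicator hc
      have hψm : Measurable[G₃] ψ := measurable_const.indicator hd
      have hIF : IndepFun φ ψ P := by
        rw [IndepFun_iff_Indep]
        refine indep_of_indep_of_le_right (indep_of_indep_of_le_left hindep ?_) ?_
        · exact le_trans (MeasurableSpace.comap_le_iff_le_map.mpr hφm)
            (le_sup_right : G₂ ≤ G₁ ⊔ G₂)
        · exact MeasurableSpace.comap_le_iff_le_map.mpr hψm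
      have hmul : ∫ x, φ x * ψ x ∂P = (∫ x, φ x ∂P) * ∫ x, ψ x ∂P := by
        exact hIF.integral_mul_eq_mul_integral ((hφm.mono h₂ le_rfl)).aestronglyMeasurable
          ((hψm.mono h₃ le_rfl)).aestronglyMeasurable
      have hprod : ∀ x, φ x * ψ x = (c ∩ d).indicator f x := by
        intro x
        by_cases hxc : x ∈ c <;> by_cases hxd : x ∈ d <;>
          simp [hφ_def, hψ_def, Set.indicator_apply, hxc, hxd]
      have hφint : ∫ x, φ x ∂P = ∫ x in c, f x ∂P := integral_indicator hc0
      have hψint : ∫ x, ψ x ∂P = (P d).toReal := by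
        rw [hψ_def]
        simp [integral_indicator hd0, measureReal_def]
      have hcf : ∫ x in c, f x ∂P = ∫ x in c, g x ∂P := setIntegral_condExp h₂ hg_int hc
      have hsetg : ∀ t : Set Ω, MeasurableSet t → ∫ x in t, g x ∂P = (P (t ∩ A)).toReal := by
        intro t ht
        rw [hg_def, setIntegral_indicator hAmeas]
        simp [measureReal_def]
      have hLHS : ∫ x in c ∩ d, f x ∂P = (P (c ∩ A)).toReal * (P d).toReal := by
        rw [← integral_indicator (hc0.inter hd0)]
        calc ∫ x, (c ∩ d).indicator f x ∂P = ∫ x, φ x * ψ x ∂P := by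
              exact integral_congr_ae (Filter.Eventually.of_forall fun x => (hprod x).symm)
          _ = (∫ x, φ x ∂P) * ∫ x, ψ x ∂P := hmul
          _ = (P (c ∩ A)).toReal * (P d).toReal := by
              rw [hφint, hψint, hcf, hsetg c hc0]
      have hindep_sets : P (A ∩ c ∩ d) = P (A ∩ c) * P d := by
        have hAc : MeasurableSet[G₁ ⊔ G₂] (A ∩ c) :=
          ((le_sup_left : G₁ ≤ G₁ ⊔ G₂) _ hA).inter ((le_sup_right : G₂ ≤ G₁ ⊔ G₂) _ hc)
        exact (Indep_iff _ _ _).mp hindep _ _ hAc hd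
      rw [hLHS, hsetg _ (hc0.inter hd0)]
      have h1 : c ∩ d ∩ A = A ∩ c ∩ d := by ext x; simp only [Set.mem_inter_iff]; tauto
      have h2 : c ∩ A = A ∩ c := Set.inter_comm c A
      rw [h1, h2, hindep_sets, ENNReal.toReal_mul]
    · intro t htm hct
      have ht0 : MeasurableSet t := hm _ htm
      have h1 : ∫ x in t, f x ∂P + ∫ x in tᶜ, f x ∂P = ∫ x, f x ∂P :=
        integral_add_compl ht0 hf_int
      have h2 : ∫ x in t, g x ∂P + ∫ x in tᶜ, g x ∂P = ∫ x, g x ∂P :=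
        integral_add_compl ht0 hg_int
      have h3 : ∫ x, f x ∂P = ∫ x, g x ∂P := integral_condExp h₂
      linarith
    · intro u hdisj humeas hcu
      have hu0 : ∀ i, MeasurableSet (u i) := fun i => hm _ (humeas i)
      rw [integral_iUnion hu0 hdisj hf_int.integrableOn,
        integral_iUnion hu0 hdisj hg_int.integrableOn]
      exact tsum_congr hcu
  -- conclude f =ᵐ[P] B.indicator 1
  have hfm' : AEStronglyMeasurable[G₂ ⊔ G₃] f P :=
    (hf_sm.mono (le_sup_left : G₂ ≤ G₂ ⊔ G₃)).aestronglyMeasurable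
  have hBm' : AEStronglyMeasurable[G₂ ⊔ G₃] (B.indicator (1 : Ω → ℝ)) P :=
    (stronglyMeasurable_const.indicator hBm).aestronglyMeasurable
  have hfeqB : f =ᵐ[P] B.indicator 1 := by
    refine ae_eq_of_forall_setIntegral_eq_of_sigmaFinite' hm
      (fun s _ _ => hf_int.integrableOn) (fun s _ _ => hB_int.integrableOn)
      (fun s hs _ => ?_) hfm' hBm'
    rw [hkey s hs]
    exact setIntegral_congr_ae (hm _ hs) (hgB.mono fun x hx _ => hx)
  have hfeqA : f =ᵐ[P] g := hfeqB.trans hgB.symm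
  refine ⟨f ⁻¹' {1}, hf_sm.measurable (measurableSet_singleton (1 : ℝ)), ?_⟩
  rw [measure_symmDiff_eq_zero_iff]
  filter_upwards [hfeqA] with ω hω
  have : ω ∈ A ↔ ω ∈ f ⁻¹' {1} := by
    simp only [Set.mem_preimage, Set.mem_singleton_iff]
    constructor
    · intro h; rw [hω, hg_def, Set.indicator_of_mem h]; rfl
    · intro h
      by_contra hωA
      rw [hω, hg_def, Set.indicator_of_notMem hωA] at h
      exact one_ne_zero h.symm
  exact propext this
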